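/- In the ice-cream SCM, for every intervention protocol X₁' for X₁ and X₂' for X₂, the causal information gain satisfies I_c(Y | do(X₂ ~ X₂')) > I_c(Y | do(X₁ ~ X₁')), even though the mutual informations satisfy the opposite strict inequality I(Y; X₁) > I(Y; X₂). -/

import Mathlib

open Finset

/-- Base-2 Shannon entropy of a distribution on a finite type. -/
noncomputable def entropy {α : Type*} [Fintype α] (p : α → ℝ) : ℝ :=
  -∑ y, p y * Real.logb 2 (p y)

/-- `p` is a probability distribution on the finite type `α`. -/
def IsDist {α : Type*} [Fintype α] (p : α → ℝ) : Prop :=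
  (∀ a, 0 ≤ p a) ∧ ∑ a, p a = 1

/-- Joint weight of the noises `(N_W, N_{X₂}, N_{X₁})`, independent with
`N_W ~ Bernoulli(1/2)`, `N_{X₂} ~ Bernoulli(1/4)`, `N_{X₁} ~ Bernoulli(1/64)`. -/
noncomputable def iceWeight3 (ω : Bool × Bool × Bool) : ℝ :=
  (if ω.1 then (1:ℝ)/2 else 1/2) * (if ω.2.1 then (1:ℝ)/4 else 3/4) *
    (if ω.2.2 then (1:ℝ)/64 else 63/64)

/-- Value of `Y = X₂ + W` (the assignments `W = N_W`, `X₂ = N_{X₂}` are identities). -/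
def iceY3 (ω : Bool × Bool × Bool) : ℕ := (if ω.2.1 then 1 else 0) + (if ω.1 then 1 else 0)

/-- Value of `X₁ = W + N_{X₁}`. -/
def iceX1 (ω : Bool × Bool × Bool) : ℕ := (if ω.1 then 1 else 0) + (if ω.2.2 then 1 else 0)

/-- Observational distribution of `Y` on `{0,1,2}`. -/
noncomputable def icePY3 : Fin 3 → ℝ := fun y =>
  ∑ ω ∈ Finset.univ.filter (fun ω : Bool × Bool × Bool => iceY3 ω = (y : ℕ)), iceWeight3 ω

/-- Post-intervention distribution of `Y` under `do(X₁ = x₁)`: the structural assignments of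
`W`, `X₂` and `Y` are unchanged, so `Y` is still computed as `X₂ + W` from the same noises. -/
noncomputable def icePdoX1 (_x₁ : Fin 3) : Fin 3 → ℝ := fun y =>
  ∑ ω ∈ Finset.univ.filter (fun ω : Bool × Bool × Bool => iceY3 ω = (y : ℕ)), iceWeight3 ω

/-- Post-intervention distribution of `Y` under `do(X₂ = x₂)`: `Y = x₂ + W`. -/
noncomputable def icePdoX2 (x₂ : Bool) : Fin 3 → ℝ := fun y =>
  ∑ ω ∈ Finset.univ.filter (fun ω : Bool × Bool × Bool =>
      ((if x₂ then 1 else 0) + (if ω.1 then 1 else 0) : ℕ) = (y : ℕ)), iceWeight3 ω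

/-- `P(X₁ = x)`. -/
noncomputable def icePX1 (x : Fin 3) : ℝ :=
  ∑ ω ∈ Finset.univ.filter (fun ω : Bool × Bool × Bool => iceX1 ω = (x : ℕ)), iceWeight3 ω

/-- `P(X₂ = x)`. -/
noncomputable def icePX2 (x : Bool) : ℝ :=
  ∑ ω ∈ Finset.univ.filter (fun ω : Bool × Bool × Bool => ω.2.1 = x), iceWeight3 ω

/-- Conditional distribution of `Y` given `X₁ = x`. -/
noncomputable def iceCondYX1 (x : Fin 3) : Fin 3 → ℝ := fun y =>
  (∑ ω ∈ Finset.univ.filter (fun ω : Bool × Bool × Bool =>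
      iceY3 ω = (y : ℕ) ∧ iceX1 ω = (x : ℕ)), iceWeight3 ω) / icePX1 x

/-- Conditional distribution of `Y` given `X₂ = x`. -/
noncomputable def iceCondYX2 (x : Bool) : Fin 3 → ℝ := fun y =>
  (∑ ω ∈ Finset.univ.filter (fun ω : Bool × Bool × Bool =>
      iceY3 ω = (y : ℕ) ∧ ω.2.1 = x), iceWeight3 ω) / icePX2 x

/-- Mutual information `I(Y; X₁) = H(Y) - H(Y | X₁)`. -/
noncomputable def iceMIX1 : ℝ :=
  entropy icePY3 - ∑ x : Fin 3, icePX1 x * entropy (iceCondYX1 x)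

/-- Mutual information `I(Y; X₂) = H(Y) - H(Y | X₂)`. -/
noncomputable def iceMIX2 : ℝ :=
  entropy icePY3 - ∑ x : Bool, icePX2 x * entropy (iceCondYX2 x)


private lemma logb_two_pow (k : ℕ) : Real.logb 2 ((2:ℝ)^k) = k := by
  simp [Real.logb_pow, Real.logb_self_eq_one]

private lemma logb_div_pow (a : ℝ) (ha : a ≠ 0) (k : ℕ) :
    Real.logb 2 (a / 2^k) = Real.logb 2 a - k := by
  rw [Real.logb_div ha (by positivity), logb_two_pow]

private lemma logb_lt_of_pow {x : ℝ} (hx : 0 < x) (p q : ℕ) (hq : 0 < q)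
    (h : x ^ q < 2 ^ p) : Real.logb 2 x < p / q := by
  have h2 : Real.logb 2 (x ^ q) < Real.logb 2 ((2:ℝ) ^ p) :=
    Real.logb_lt_logb (by norm_num) (by positivity) h
  simp only [Real.logb_pow, Real.logb_self_eq_one (by norm_num : (1:ℝ) < 2), mul_one] at h2
  rw [lt_div_iff₀ (by exact_mod_cast hq)]
  linarith
private lemma logb_gt_of_pow {x : ℝ} (hx : 0 < x) (p q : ℕ) (hq : 0 < q)
    (h : (2:ℝ) ^ p < x ^ q) : (p:ℝ) / q < Real.logb 2 x := by
  have h2 : Real.logb 2 ((2:ℝ)^p) < Real.logb 2 (x ^ q) :=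
    Real.logb_lt_logb (by norm_num) (by positivity) h
  simp only [Real.logb_pow, Real.logb_self_eq_one (by norm_num : (1:ℝ) < 2), mul_one] at h2
  rw [div_lt_iff₀ (by exact_mod_cast hq)]
  linarith

private lemma L3_lt : Real.logb 2 3 < 8/5 := by
  have := logb_lt_of_pow (x := 3) (by norm_num) 8 5 (by norm_num) (by norm_num)
  norm_num at this ⊢; linarith
private lemma L3_gt : 19/12 < Real.logb 2 3 := by
  have := logb_gt_of_pow (x := 3) (by norm_num) 19 12 (by norm_num) (by norm_num)
  norm_num at this ⊢; linarith
private lemma L95_gt : 13/2 < Real.logb 2 95 := by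
  have := logb_gt_of_pow (x := 95) (by norm_num) 13 2 (by norm_num) (by norm_num)
  norm_num at this ⊢; linarith
private lemma L63_gt : 5 < Real.logb 2 63 := by
  have := logb_gt_of_pow (x := 63) (by norm_num) 5 1 (by norm_num) (by norm_num)
  norm_num at this ⊢; linarith

private lemma entropy3 (p : Fin 3 → ℝ) : entropy p =
    -(p 0 * Real.logb 2 (p 0) + p 1 * Real.logb 2 (p 1) + p 2 * Real.logb 2 (p 2)) := by
  simp [entropy, Fin.sum_univ_three]

private lemma hPY3 : icePY3 = ![3/8, 1/2, 1/8] := by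
  funext y; fin_cases y <;>
  norm_num [icePY3, Finset.sum_filter, Fintype.sum_prod_type, Fintype.sum_bool] <;>
  norm_num [iceY3, iceWeight3]

private lemma hHY : entropy icePY3 = 2 - 3/8 * Real.logb 2 3 := by
  rw [hPY3, entropy3]
  norm_num
  simp only [Matrix.cons_val]
  rw [show (3/8 : ℝ) = 3 / 2^3 by norm_num, logb_div_pow 3 (by norm_num),
    show (1/2 : ℝ) = 1 / 2^1 by norm_num, logb_div_pow 1 (by norm_num),
    show (1/8 : ℝ) = 1 / 2^3 by norm_num, logb_div_pow 1 (by norm_num)]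
  simp [Real.logb_one]
  ring

private lemma hdo2 (b : Bool) : entropy (icePdoX2 b) = 1 := by
  have h : icePdoX2 b = if b then ![0, 1/2, 1/2] else ![1/2, 1/2, 0] := by
    funext y; cases b <;> fin_cases y <;>
    norm_num [icePdoX2, iceWeight3, Finset.sum_filter, Fintype.sum_prod_type,
      Fintype.sum_bool]
  cases b <;> simp only [h, if_true, if_false] <;> rw [entropy3] <;>
  · norm_num
    rw [show (1/2 : ℝ) = 1 / 2^1 by norm_num, logb_div_pow 1 (by norm_num)]
    simp [Real.logb_one]
    norm_num

private lemma hPX1 : icePX1 = ![63/128, 1/2, 1/128] := by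
  funext x; fin_cases x <;>
  norm_num [icePX1, Finset.sum_filter, Fintype.sum_prod_type, Fintype.sum_bool] <;>
  norm_num [iceX1, iceWeight3]

private lemma hPX2 : icePX2 = fun b => if b then 1/4 else 3/4 := by
  funext b; cases b <;>
  norm_num [icePX2, iceWeight3, Finset.sum_filter, Fintype.sum_prod_type, Fintype.sum_bool]

private lemma hC1_0 : iceCondYX1 0 = ![3/4, 1/4, 0] := by
  funext y; fin_cases y <;>
  norm_num [iceCondYX1, icePX1, iceY3, iceX1, iceWeight3, Finset.sum_filter,
    Fintype.sum_prod_type, Fintype.sum_bool]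

private lemma hC1_2 : iceCondYX1 2 = ![0, 3/4, 1/4] := by
  funext y; fin_cases y <;>
  norm_num [iceCondYX1, icePX1, iceY3, iceX1, iceWeight3, Finset.sum_filter,
    Fintype.sum_prod_type, Fintype.sum_bool]

private lemma hC1_1 : iceCondYX1 1 = ![3/256, 190/256, 63/256] := by
  funext y; fin_cases y <;>
  norm_num [iceCondYX1, icePX1, iceY3, iceX1, iceWeight3, Finset.sum_filter,
    Fintype.sum_prod_type, Fintype.sum_bool]

private lemma hC2 (b : Bool) : iceCondYX2 b = if b then ![0, 1/2, 1/2] else ![1/2, 1/2, 0] := by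
  funext y; cases b <;> fin_cases y <;>
  norm_num [iceCondYX2, icePX2, Finset.sum_filter,
    Fintype.sum_prod_type, Fintype.sum_bool] <;> norm_num [iceY3, iceWeight3]

private lemma hH10 : entropy (iceCondYX1 0) = 2 - 3/4 * Real.logb 2 3 := by
  rw [hC1_0, entropy3]
  norm_num
  rw [show (3/4 : ℝ) = 3 / 2^2 by norm_num, logb_div_pow 3 (by norm_num),
    show (1/4 : ℝ) = 1 / 2^2 by norm_num, logb_div_pow 1 (by norm_num)]
  simp [Real.logb_one]; ring

private lemma hH12 : entropy (iceCondYX1 2) = 2 - 3/4 * Real.logb 2 3 := by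
  rw [hC1_2, entropy3]
  norm_num
  simp only [Matrix.cons_val]
  rw [show (3/4 : ℝ) = 3 / 2^2 by norm_num, logb_div_pow 3 (by norm_num),
    show (1/4 : ℝ) = 1 / 2^2 by norm_num, logb_div_pow 1 (by norm_num)]
  simp [Real.logb_one]; ring

private lemma hH11 : entropy (iceCondYX1 1) =
    -(3/256 * (Real.logb 2 3 - 8) + 190/256 * (Real.logb 2 95 - 7)
      + 63/256 * (Real.logb 2 63 - 8)) := by
  rw [hC1_1, entropy3]
  norm_num
  simp only [Matrix.cons_val]
  rw [show (3/256 : ℝ) = 3 / 2^8 by norm_num, logb_div_pow 3 (by norm_num),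
    show (95/128 : ℝ) = 95 / 2^7 by norm_num, logb_div_pow 95 (by norm_num),
    show (63/256 : ℝ) = 63 / 2^8 by norm_num, logb_div_pow 63 (by norm_num)]
  push_cast; ring

private lemma hH2 (b : Bool) : entropy (iceCondYX2 b) = 1 := by
  rw [hC2]
  cases b <;> simp only [Bool.false_eq_true, if_false, if_true] <;> rw [entropy3] <;>
  · norm_num
    rw [show (1/2 : ℝ) = 1 / 2^1 by norm_num, logb_div_pow 1 (by norm_num)]
    simp [Real.logb_one]; norm_num

/-- In the ice-cream SCM, for all intervention protocols `X₁'`, `X₂'`, the causal information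
gain satisfies `I_c(Y | do(X₂ ~ X₂')) > I_c(Y | do(X₁ ~ X₁'))`, even though the mutual
informations satisfy the opposite strict inequality `I(Y; X₁) > I(Y; X₂)`. -/
theorem ice_cream_Ic_vs_MI :
    (∀ (pX₁' : Fin 3 → ℝ) (pX₂' : Bool → ℝ), IsDist pX₁' → IsDist pX₂' →
      entropy icePY3 - ∑ x₂ : Bool, pX₂' x₂ * entropy (icePdoX2 x₂)
        > entropy icePY3 - ∑ x₁ : Fin 3, pX₁' x₁ * entropy (icePdoX1 x₁)) ∧
    iceMIX1 > iceMIX2 := by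
  constructor
  · intro p1 p2 h1 h2
    have e1 : ∀ x, entropy (icePdoX1 x) = entropy icePY3 := fun _ => rfl
    simp only [e1, hdo2, mul_one, ← Finset.sum_mul]
    rw [h1.2, h2.2, one_mul]
    have := L3_lt
    rw [hHY]; linarith
  · unfold iceMIX1 iceMIX2
    rw [Fin.sum_univ_three, Fintype.sum_bool, hH10, hH11, hH12, hH2, hH2, hPX1, hPX2]
    have := L3_gt; have := L95_gt; have := L63_gt
    norm_num
    simp only [Matrix.cons_val]
    linarith
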